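/- Let α ≠ 0, a, b ∈ ℝ, and let q : I → ℝ be a twice differentiable positive function on an open interval I with q(s)^α = a·s + b for all s ∈ I. Let Θ : I → ℝ be an antiderivative of 1/q (i.e. Θ'(s) = 1/q(s)), and suppose U : Θ(I) → ℝ is a differentiable function with U(Θ(s)) = −q'(s) for all s ∈ I. Then U'(Θ(s)) = (α − 1)·U(Θ(s))² for all s ∈ I. -/
import Mathlib


/-- The similarity curvature `u` of a log-aesthetic curve of slope `α ≠ 0`
(whose curvature radius satisfies `q ^ α = a s + b` in arc length `s`), expressed as a
function `U` of the turning angle `θ = Θ(s)` (where `Θ' = 1/q`) via `U(Θ(s)) = -q'(s)`,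
satisfies the Bernoulli equation `U' = (α - 1) U²`. -/
theorem lac_similarity_curvature_bernoulli (α a b : ℝ) (hα : α ≠ 0)
    (I : Set ℝ) (hIopen : IsOpen I) (hIinterval : I.OrdConnected)
    (q q' q'' Θ U U' : ℝ → ℝ)
    (hqpos : ∀ s ∈ I, 0 < q s)
    (hq : ∀ s ∈ I, HasDerivAt q (q' s) s)
    (hq' : ∀ s ∈ I, HasDerivAt q' (q'' s) s)
    (heq : ∀ s ∈ I, q s ^ α = a * s + b)
    (hΘ : ∀ s ∈ I, HasDerivAt Θ (1 / q s) s)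
    (hU : ∀ θ ∈ Θ '' I, HasDerivAt U (U' θ) θ)
    (hUval : ∀ s ∈ I, U (Θ s) = -q' s) :
    ∀ s ∈ I, U' (Θ s) = (α - 1) * (U (Θ s)) ^ 2 := by
  -- first derivative identity on all of I
  have h1 : ∀ s ∈ I, q' s * α * q s ^ (α - 1) = a := by
    intro s hs
    have hd : HasDerivAt (fun t => q t ^ α) (q' s * α * q s ^ (α - 1)) s :=
      (hq s hs).rpow_const (Or.inl (hqpos s hs).ne')
    have hev : (fun t => a * t + b) =ᶠ[nhds s] (fun t => q t ^ α) :=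
      Filter.eventuallyEq_of_mem (hIopen.mem_nhds hs) (fun x hx => (heq x hx).symm)
    have hd2 : HasDerivAt (fun t => a * t + b) (q' s * α * q s ^ (α - 1)) s :=
      hd.congr_of_eventuallyEq hev
    have hd3 : HasDerivAt (fun t => a * t + b) a s := by
      simpa using ((hasDerivAt_id s).const_mul a).add_const b
    exact hd2.unique hd3
  intro s hs
  have hqne : q s ≠ 0 := (hqpos s hs).ne'
  have hPpos : 0 < q s ^ (α - 1) := Real.rpow_pos_of_pos (hqpos s hs) _
  -- differentiate h1
  have hA : HasDerivAt (fun t => q' t * α) (q'' s * α) s := (hq' s hs).mul_const α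
  have hB : HasDerivAt (fun t => q t ^ (α - 1))
      (q' s * (α - 1) * q s ^ (α - 1 - 1)) s :=
    (hq s hs).rpow_const (Or.inl hqne)
  have hg : HasDerivAt (fun t => q' t * α * q t ^ (α - 1))
      (q'' s * α * q s ^ (α - 1) + q' s * α * (q' s * (α - 1) * q s ^ (α - 1 - 1))) s :=
    hA.mul hB
  have hev2 : (fun _ : ℝ => a) =ᶠ[nhds s] (fun t => q' t * α * q t ^ (α - 1)) :=
    Filter.eventuallyEq_of_mem (hIopen.mem_nhds hs) (fun x hx => (h1 x hx).symm)
  have hD : q'' s * α * q s ^ (α - 1) + q' s * α * (q' s * (α - 1) * q s ^ (α - 1 - 1)) = 0 :=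
    (hg.congr_of_eventuallyEq hev2).unique (hasDerivAt_const s a)
  have hsub : q s ^ (α - 1 - 1) = q s ^ (α - 1) / q s := by
    rw [Real.rpow_sub (hqpos s hs), Real.rpow_one]
  rw [hsub] at hD
  have hq2 : q'' s * q s = -(α - 1) * (q' s) ^ 2 := by
    field_simp at hD
    have h2 : α * q s ^ (α - 1) * (q'' s * q s + (α - 1) * (q' s) ^ 2) = 0 := by
      linear_combination hD
    rcases mul_eq_zero.mp h2 with h | h
    · rcases mul_eq_zero.mp h with h' | h'
      · exact absurd h' hα
      · exact absurd h' hPpos.ne'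
    · linarith
  -- chain rule
  have hUc : HasDerivAt (fun t => U (Θ t)) (U' (Θ s) * (1 / q s)) s :=
    (hU (Θ s) ⟨s, hs, rfl⟩).comp s (hΘ s hs)
  have hev3 : (fun t => -q' t) =ᶠ[nhds s] (fun t => U (Θ t)) :=
    Filter.eventuallyEq_of_mem (hIopen.mem_nhds hs) (fun x hx => (hUval x hx).symm)
  have hkey : U' (Θ s) * (1 / q s) = -q'' s :=
    (hUc.congr_of_eventuallyEq hev3).unique (hq' s hs).neg
  have : U' (Θ s) = -q'' s * q s := by
    field_simp at hkey
    linarith [hkey]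
  rw [this, hUval s hs]
  nlinarith [hq2]
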